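/- Let V ≥ 2 and N = V(V−1)/2. For every π ∈ (0,1)^N there exist a matrix X ∈ ℝ^{V×V} and a diagonal V×V matrix Λ with nonnegative diagonal entries such that π_l = 1/(1 + exp(−(XΛX^T)_{vu})) for every pair 1 ≤ u < v ≤ V with index l = l(v,u). -/

import Mathlib

open Matrix

/-- The index set of edges: pairs `(v, u)` with `u < v`, of cardinality `V(V-1)/2`. -/
abbrev EdgeIdx (V : ℕ) := {q : Fin V × Fin V // q.2 < q.1}

lemma posSemidef_sum {n : Type*} [Fintype n] {ι : Type*} (s : Finset ι)
    (f : ι → Matrix n n ℝ) (h : ∀ i ∈ s, (f i).PosSemidef) :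
    (∑ i ∈ s, f i).PosSemidef := by
  classical
  induction s using Finset.induction with
  | empty => simpa using Matrix.PosSemidef.zero
  | insert _ _ hx ih =>
    rw [Finset.sum_insert hx]
    exact (h _ (Finset.mem_insert_self _ _)).add
      (ih fun i hi => h i (Finset.mem_insert_of_mem hi))

lemma posSemidef_smul_vecMulVec {n : Type*} [Fintype n] (c : ℝ) (hc : 0 ≤ c) (w : n → ℝ) :
    (c • Matrix.vecMulVec w w).PosSemidef := by
  simpa using (Matrix.posSemidef_vecMulVec_self_star w).smul hc

open scoped MatrixOrder

/-- Surjectivity of the low-rank logistic factorization: every edge-probability vector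
`π ∈ (0,1)^{V(V-1)/2}` arises as `π_l = σ((XΛXᵀ)_{vu})` for some latent coordinate matrix
`X ∈ ℝ^{V×V}` and diagonal matrix `Λ` with nonnegative diagonal entries. -/
theorem lowrank_logistic_surjective (V : ℕ) (hV : 2 ≤ V) (π : EdgeIdx V → ℝ)
    (hπ : ∀ q, π q ∈ Set.Ioo (0 : ℝ) 1) :
    ∃ (X : Matrix (Fin V) (Fin V) ℝ) (lam : Fin V → ℝ),
      (∀ r, 0 ≤ lam r) ∧
      ∀ q : EdgeIdx V,
        π q = 1 / (1 + Real.exp (-((X * Matrix.diagonal lam * Xᵀ) q.1.1 q.1.2))) := by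
  classical
  -- target logits
  set L : EdgeIdx V → ℝ := fun q => Real.log (π q / (1 - π q)) with hL
  set sgn : EdgeIdx V → ℝ := fun q => if 0 ≤ L q then 1 else -1 with hsgn
  set w : EdgeIdx V → Fin V → ℝ := fun q i =>
    (if i = q.1.2 then 1 else 0) + sgn q * (if i = q.1.1 then 1 else 0) with hw
  set M : Matrix (Fin V) (Fin V) ℝ :=
    ∑ q : EdgeIdx V, |L q| • Matrix.vecMulVec (w q) (w q) with hM
  have hMpsd : M.PosSemidef :=
    posSemidef_sum _ _ fun q _ => posSemidef_smul_vecMulVec _ (abs_nonneg _) _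
  -- entries of M at edge indices equal the logits
  have hMentry : ∀ q : EdgeIdx V, M q.1.1 q.1.2 = L q := by
    intro q
    have hterm : ∀ p : EdgeIdx V,
        (|L p| • Matrix.vecMulVec (w p) (w p)) q.1.1 q.1.2
          = if p = q then L q else 0 := by
      intro p
      by_cases hpq : p = q
      · subst hpq
        have hne : p.1.1 ≠ p.1.2 := ne_of_gt p.2
        have e1 : w p p.1.1 = sgn p := by simp [hw, hne]
        have e2 : w p p.1.2 = 1 := by simp [hw, hne.symm]
        simp only [Matrix.smul_apply, Matrix.vecMulVec_apply, smul_eq_mul, e1, e2,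
          if_pos rfl, mul_one]
        rcases le_or_gt 0 (L p) with h | h
        · simp [hsgn, h, abs_of_nonneg h]
        · simp [hsgn, not_le.mpr h, abs_of_neg h]
      · have hz : w p q.1.1 * w p q.1.2 = 0 := by
          have hq2 : q.1.2 < q.1.1 := q.2
          have hp2 : p.1.2 < p.1.1 := p.2
          by_cases hac : q.1.1 = p.1.1
          · have hbd : q.1.2 ≠ p.1.2 := fun hbd =>
              hpq (Subtype.ext (Prod.ext hac.symm hbd.symm))
            have hbc : q.1.2 ≠ p.1.1 := by
              intro hbc; rw [← hac] at hbc; exact absurd hq2 (hbc ▸ lt_irrefl _)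
            have : w p q.1.2 = 0 := by simp [hw, hbd, hbc]
            rw [this, mul_zero]
          · by_cases had : q.1.1 = p.1.2
            · have hbd : q.1.2 ≠ p.1.2 := fun h => absurd hq2 (by rw [h, ← had]; exact lt_irrefl _)
              have hbc : q.1.2 ≠ p.1.1 := by
                intro h
                have : p.1.1 < p.1.1 :=
                  calc p.1.1 = q.1.2 := h.symm
                    _ < q.1.1 := hq2
                    _ = p.1.2 := had
                    _ < p.1.1 := hp2
                exact absurd this (lt_irrefl _)
              have : w p q.1.2 = 0 := by simp [hw, hbd, hbc]
              rw [this, mul_zero]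
            · have : w p q.1.1 = 0 := by simp [hw, had, hac]
              rw [this, zero_mul]
        simp [Matrix.smul_apply, Matrix.vecMulVec_apply, hz, hpq]
    calc M q.1.1 q.1.2
        = ∑ p : EdgeIdx V, (|L p| • Matrix.vecMulVec (w p) (w p)) q.1.1 q.1.2 := by
          rw [hM]; simp [Matrix.sum_apply]
      _ = L q := by
          rw [Finset.sum_congr rfl fun p _ => hterm p]
          simp
  -- take square root
  refine ⟨CFC.sqrt M, fun _ => 1, fun _ => zero_le_one, ?_⟩
  have hsqrtT : (CFC.sqrt M)ᵀ = CFC.sqrt M := by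
    have := (CFC.sqrt_nonneg M).posSemidef.1
    simpa [Matrix.IsHermitian, Matrix.conjTranspose_eq_transpose_of_trivial] using this
  have hXX : CFC.sqrt M * Matrix.diagonal (fun _ : Fin V => (1:ℝ)) * (CFC.sqrt M)ᵀ = M := by
    rw [hsqrtT]
    simp [Matrix.diagonal_one, CFC.sqrt_mul_sqrt_self M hMpsd.nonneg]
  intro q
  rw [hXX, hMentry q]
  obtain ⟨h0, h1⟩ := hπ q
  have hr : 0 < π q / (1 - π q) := div_pos h0 (by linarith)
  rw [hL]
  simp only
  rw [Real.exp_neg, Real.exp_log hr]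
  field_simp
  ring
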